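/- Let q be a prime power, n ≥ 1, and let a₁,…,a_k ∈ F_q be nonzero coefficients such that the multiset {a₁,…,a_k} can be partitioned into pairs each summing to zero (so k = 2m and, after reindexing, the linear form is a₁(x₁−x₁') + ⋯ + a_m(x_m−x_m')). Then for every function f : F_q^n → [0,1], the average of f(x₁)⋯f(x_k) over all tuples (x₁,…,x_k) ∈ (F_q^n)^k satisfying a₁x₁+⋯+a_kx_k = 0 is at least (E f)^k, where E f is the average of f over F_q^n. -/
import Mathlib

open Finset

lemma sidorenko_aux {F V : Type} [Field F] [Fintype F] [DecidableEq F]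
    [AddCommGroup V] [Module F V] [Fintype V] [DecidableEq V]
    (k' : ℕ) (a : Fin (k' + 1) → F) (ha : ∀ i, a i ≠ 0)
    (σ : Equiv.Perm (Fin (k' + 1)))
    (hσ : ∀ i, σ i ≠ i ∧ σ (σ i) = i ∧ a (σ i) = - a i)
    (f : V → ℝ) (hf : ∀ v, 0 ≤ f v) :
    (∑ x ∈ Finset.univ.filter
        (fun x : Fin (k' + 1) → V => ∑ i, a i • x i = 0), ∏ i, f (x i)) /
      ((Finset.univ.filter
        (fun x : Fin (k' + 1) → V => ∑ i, a i • x i = 0)).card : ℝ)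
    ≥ ((∑ v, f v) / (Fintype.card V : ℝ)) ^ (k' + 1) := by
  classical
  have hσne : ∀ i, σ i ≠ i := fun i => (hσ i).1
  have hσσ : ∀ i, σ (σ i) = i := fun i => (hσ i).2.1
  have hσa : ∀ i, a (σ i) = - a i := fun i => (hσ i).2.2
  have hlt : ∀ i : Fin (k' + 1), ¬ i < σ i → σ i < σ (σ i) := by
    intro i h
    rw [hσσ]
    exact lt_of_le_of_ne (not_lt.mp h) (hσne i)
  -- the pairing equivalence
  set P := {i : Fin (k' + 1) // i < σ i} with hP
  obtain ⟨e, e1, e2⟩ : ∃ e : P × Bool ≃ Fin (k' + 1),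
      (∀ p : P, e (p, true) = (p.1 : Fin (k' + 1))) ∧
      (∀ p : P, e (p, false) = σ p.1) := by
    refine ⟨⟨fun pb => if pb.2 then pb.1.1 else σ pb.1.1,
      fun i => if h : i < σ i then (⟨i, h⟩, true) else (⟨σ i, hlt i h⟩, false),
      ?_, ?_⟩, fun p => rfl, fun p => rfl⟩
    · rintro ⟨⟨i, hi⟩, b⟩
      cases b
      · simp only [if_false, Bool.false_eq_true]
        rw [dif_neg (by rw [hσσ]; exact not_lt.mpr (le_of_lt hi))]
        ext
        · simp [hσσ]
        · rfl
      · simp only [if_true]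
        rw [dif_pos hi]
    · intro i
      by_cases h : i < σ i
      · dsimp only; rw [dif_pos h]; simp
      · dsimp only
        rw [dif_neg h]
        simpa using hσσ i
  have hcardP : Fintype.card P * 2 = k' + 1 := by
    have := Fintype.card_congr e
    simpa [Fintype.card_prod] using this
  let A : (P → V) → ℝ := fun y => ∏ p, f (y p)
  let g : (P → V) → V := fun y => ∑ p, a p.1 • y p
  let H : V → ℝ := fun u => ∑ y, if g y = u then A y else 0
  -- the bijection between pairs and tuples
  let Ψ : ((P → V) × (P → V)) → (Fin (k' + 1) → V) :=
    fun yz i => if h : i < σ i then yz.1 ⟨i, h⟩ else yz.2 ⟨σ i, hlt i h⟩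
  have hΨ1 : ∀ yz (p : P), Ψ yz p.1 = yz.1 p := by
    rintro yz ⟨p, hp⟩
    simp only [Ψ, dif_pos hp]
  have hΨ2 : ∀ yz (p : P), Ψ yz (σ p.1) = yz.2 p := by
    rintro yz ⟨p, hp⟩
    have h : ¬ σ p < σ (σ p) := by rw [hσσ]; exact not_lt.mpr (le_of_lt hp)
    simp only [Ψ, dif_neg h]
    have hpp : (⟨σ (σ p), hlt (σ p) h⟩ : {i : Fin (k' + 1) // i < σ i}) = ⟨p, hp⟩ :=
      Subtype.ext (hσσ p)
    rw [hpp]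
  have hΨbij : Function.Bijective Ψ := by
    rw [Fintype.bijective_iff_injective_and_card]
    constructor
    · intro yz yz' hEq
      ext p
      · rw [← hΨ1 yz p, ← hΨ1 yz' p, hEq]
      · rw [← hΨ2 yz p, ← hΨ2 yz' p, hEq]
    · simp only [Fintype.card_prod, Fintype.card_fun, ← pow_add, ← two_mul,
        Fintype.card_fin]
      rw [Nat.mul_comm, hcardP]
  -- rewrite the constrained summand through the bijection
  have hsum : ∀ yz : (P → V) × (P → V),
      (if g yz.1 = g yz.2 then A yz.1 * A yz.2 else 0)
        = (if ∑ i, a i • Ψ yz i = 0 then ∏ i, f (Ψ yz i) else 0) := by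
    intro yz
    have hc : ∑ i, a i • Ψ yz i = g yz.1 - g yz.2 := by
      rw [← Equiv.sum_comp e (fun i => a i • Ψ yz i), Fintype.sum_prod_type]
      have hb : ∀ p : P, (∑ b : Bool, a (e (p, b)) • Ψ yz (e (p, b)))
          = a p.1 • yz.1 p - a p.1 • yz.2 p := by
        intro p
        rw [Fintype.sum_bool, e1, e2, hΨ1, hΨ2, hσa, neg_smul, ← sub_eq_add_neg]
      rw [Finset.sum_congr rfl (fun p _ => hb p), Finset.sum_sub_distrib]
    have hp2 : ∏ i, f (Ψ yz i) = A yz.1 * A yz.2 := by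
      rw [← Equiv.prod_comp e (fun i => f (Ψ yz i)), Fintype.prod_prod_type]
      have hb : ∀ p : P, (∏ b : Bool, f (Ψ yz (e (p, b))))
          = f (yz.1 p) * f (yz.2 p) := by
        intro p
        rw [Fintype.prod_bool, e1, e2, hΨ1, hΨ2]
      rw [Finset.prod_congr rfl (fun p _ => hb p), Finset.prod_mul_distrib]
    rw [hc, hp2]
    simp only [sub_eq_zero]
  -- key inner identity
  have key : ∀ y z : P → V,
      (∑ u, (if g y = u then A y else 0) * (if g z = u then A z else 0))
        = (if g y = g z then A y * A z else 0) := by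
    intro y z
    have h1 : ∀ u, (if g y = u then A y else 0) * (if g z = u then A z else 0)
        = if g y = u then (A y * if g z = u then A z else 0) else 0 := by
      intro u; split_ifs <;> simp
    rw [Finset.sum_congr rfl fun u _ => h1 u, Finset.sum_ite_eq]
    simp only [Finset.mem_univ, if_true]
    by_cases h : g z = g y
    · rw [if_pos h, if_pos h.symm]
    · rw [if_neg h, if_neg (fun hh => h hh.symm), mul_zero]
  -- the constrained sum equals ∑ u, (H u)^2
  have hS2 : (∑ x ∈ Finset.univ.filter
        (fun x : Fin (k' + 1) → V => ∑ i, a i • x i = 0), ∏ i, f (x i))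
      = ∑ u, (H u) ^ 2 := by
    rw [Finset.sum_filter,
      ← Fintype.sum_bijective Ψ hΨbij _ _ hsum, Fintype.sum_prod_type]
    have rhs : (∑ u, (H u) ^ 2)
        = ∑ y, ∑ z, if g y = g z then A y * A z else 0 :=
      calc ∑ u, (H u) ^ 2
          = ∑ u, ∑ y, ∑ z,
              (if g y = u then A y else 0) * (if g z = u then A z else 0) :=
            Finset.sum_congr rfl fun u _ => by
              rw [sq]; exact Finset.sum_mul_sum _ _ _ _
        _ = ∑ y, ∑ u, ∑ z,
              (if g y = u then A y else 0) * (if g z = u then A z else 0) :=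
            Finset.sum_comm
        _ = ∑ y, ∑ z, ∑ u,
              (if g y = u then A y else 0) * (if g z = u then A z else 0) :=
            Finset.sum_congr rfl fun y _ => Finset.sum_comm
        _ = ∑ y, ∑ z, if g y = g z then A y * A z else 0 :=
            Finset.sum_congr rfl fun y _ =>
              Finset.sum_congr rfl fun z _ => key y z
    rw [rhs]
  -- total mass of H
  have hHsum : (∑ u, H u) = (∑ v, f v) ^ Fintype.card P := by
    show (∑ u, ∑ y, if g y = u then A y else 0) = _
    rw [Finset.sum_comm]
    have h3 : ∀ y : P → V, (∑ u, if g y = u then A y else 0) = A y := by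
      intro y
      rw [Finset.sum_ite_eq]
      simp
    rw [Finset.sum_congr rfl fun y _ => h3 y]
    show (∑ y : P → V, ∏ p, f (y p)) = _
    rw [← Fintype.prod_sum (fun _ : P => fun v : V => f v), Finset.prod_const,
      Finset.card_univ]
  -- Cauchy–Schwarz
  have hCS : (∑ u, H u) ^ 2 ≤ (Fintype.card V : ℝ) * ∑ u, (H u) ^ 2 := by
    simpa [Finset.card_univ] using
      sq_sum_le_card_mul_sum_sq (s := (Finset.univ : Finset V)) (f := H)
  -- cardinality bounds for the solution set
  set D := Finset.univ.filter (fun x : Fin (k' + 1) → V => ∑ i, a i • x i = 0)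
    with hD
  have hD0 : (fun _ => 0 : Fin (k' + 1) → V) ∈ D := by
    rw [hD, Finset.mem_filter]
    refine ⟨Finset.mem_univ _, ?_⟩
    simp
  have hCpos : 0 < D.card := Finset.card_pos.mpr ⟨_, hD0⟩
  have hCle : D.card ≤ Fintype.card V ^ k' := by
    have hinj := Finset.card_le_card_of_injOn
      (f := fun (x : Fin (k' + 1) → V) => fun j : Fin k' => x j.succ)
      (s := D) (t := (Finset.univ : Finset (Fin k' → V)))
      (fun x _ => Finset.mem_univ _) ?_
    · simpa [Finset.card_univ, Fintype.card_fun] using hinj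
    · intro x hx x' hx' hEq
      have htail : ∀ j : Fin k', x j.succ = x' j.succ := fun j => congrFun hEq j
      have hx0 : ∑ i, a i • x i = 0 := (Finset.mem_filter.mp hx).2
      have hx0' : ∑ i, a i • x' i = 0 := (Finset.mem_filter.mp hx').2
      rw [Fin.sum_univ_succ] at hx0 hx0'
      have hsame : a 0 • x 0 = a 0 • x' 0 := by
        have hts : ∑ i : Fin k', a i.succ • x i.succ
            = ∑ i : Fin k', a i.succ • x' i.succ :=
          Finset.sum_congr rfl fun i _ => by rw [htail i]
        have h4 := hx0.trans hx0'.symm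
        rw [hts] at h4
        exact add_right_cancel h4
      have h0 : x 0 = x' 0 := smul_right_injective V (ha 0) hsame
      funext i
      refine Fin.cases h0 (fun j => htail j) i
  -- final arithmetic
  have hN : (0 : ℝ) < (Fintype.card V : ℝ) := by exact_mod_cast Fintype.card_pos
  have hT : (0 : ℝ) ≤ ∑ v, f v := Finset.sum_nonneg fun v _ => hf v
  have hpow : (∑ u, H u) ^ 2 = (∑ v, f v) ^ (k' + 1) := by
    rw [hHsum, ← pow_mul, hcardP]
  rw [ge_iff_le, hS2, div_pow,
    div_le_div_iff₀ (pow_pos hN _) (by exact_mod_cast hCpos)]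
  calc (∑ v, f v) ^ (k' + 1) * (D.card : ℝ)
      ≤ (∑ v, f v) ^ (k' + 1) * ((Fintype.card V : ℝ) ^ k') := by
        apply mul_le_mul_of_nonneg_left _ (pow_nonneg hT _)
        exact_mod_cast Nat.cast_le.mpr hCle
    _ ≤ ((Fintype.card V : ℝ) * ∑ u, (H u) ^ 2) * ((Fintype.card V : ℝ) ^ k') := by
        apply mul_le_mul_of_nonneg_right _ (pow_nonneg hN.le _)
        rw [← hpow]; exact hCS
    _ = (∑ u, (H u) ^ 2) * (Fintype.card V : ℝ) ^ (k' + 1) := by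
        rw [pow_succ]; ring

/-- If the nonzero coefficients `a₁, …, a_k ∈ F_q` can be partitioned into pairs each summing
to zero (witnessed by a fixed-point-free involution `σ` with `a (σ i) = -a i`), then the
equation `a₁x₁ + ⋯ + a_kx_k = 0` is Sidorenko: for every `f : F_q^n → [0,1]`, the average of
`f(x₁)⋯f(x_k)` over solutions is at least `(E f)^k`. -/
theorem stmt_0 {F : Type} [Field F] [Fintype F] [DecidableEq F]
    (n k : ℕ) (hn : 1 ≤ n) (a : Fin k → F) (ha : ∀ i, a i ≠ 0)
    (hpair : ∃ σ : Equiv.Perm (Fin k), ∀ i, σ i ≠ i ∧ σ (σ i) = i ∧ a (σ i) = - a i)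
    (f : (Fin n → F) → ℝ) (hf : ∀ v, f v ∈ Set.Icc (0 : ℝ) 1) :
    (∑ x ∈ Finset.univ.filter
        (fun x : Fin k → (Fin n → F) => ∑ i, a i • x i = 0), ∏ i, f (x i)) /
      ((Finset.univ.filter
        (fun x : Fin k → (Fin n → F) => ∑ i, a i • x i = 0)).card : ℝ)
    ≥ ((∑ v, f v) / (Fintype.card (Fin n → F) : ℝ)) ^ k := by
  classical
  obtain ⟨σ, hσ⟩ := hpair
  rcases Nat.eq_zero_or_pos k with hk | hk
  · subst hk; simp
  obtain ⟨k', rfl⟩ : ∃ k', k = k' + 1 := ⟨k - 1, (Nat.succ_pred_eq_of_pos hk).symm⟩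
  exact sidorenko_aux k' a ha σ hσ f (fun v => (hf v).1)
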